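/- The quantum Lipschitz constant of a local Hamiltonian is upper bounded by twice the maximum, over the qudits, of the operator norm of the sum of the Hamiltonian terms acting on that qudit: if H = Σ_{I ⊆ [n]} H_I where each H_I ∈ O_n acts only on the qudits in I (i.e., H_I is of the form K_I ⊗ identity on the complement of I), then ‖H‖_L ≤ 2 max_{i ∈ [n]} ‖ Σ_{I ⊆ [n] : i ∈ I} H_I ‖_∞. -/

import Mathlib

open scoped BigOperators
open scoped Classical
open scoped ComplexOrder

noncomputable section

namespace QW1

/-- Configurations of `n` qudits of local dimension `d`:
the index set of the canonical basis of `(ℂ^d)^{⊗ n}`. -/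
abbrev Cfg (d n : ℕ) : Type := Fin n → Fin d

/-- Linear operators on the Hilbert space of `n` qudits, represented as matrices
in the canonical basis. -/
abbrev Mat (d n : ℕ) : Type := Matrix (Cfg d n) (Cfg d n) ℂ

/-- The trace norm `‖A‖₁ = Tr √(Aᴴ A)`. -/
noncomputable def traceNorm {ι : Type} [Fintype ι] [DecidableEq ι] (A : Matrix ι ι ℂ) : ℝ :=
  (((((Matrix.posSemidef_conjTranspose_mul_self A).1.eigenvectorUnitary : Matrix ι ι ℂ) *
    Matrix.diagonal (fun i => ((Real.sqrt
      ((Matrix.posSemidef_conjTranspose_mul_self A).1.eigenvalues i) : ℝ) : ℂ)) *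
    (star ((Matrix.posSemidef_conjTranspose_mul_self A).1.eigenvectorUnitary : Matrix ι ι ℂ)))).trace).re

/-- The operator norm `‖A‖_∞`. -/
noncomputable def opNorm {ι : Type} [Fintype ι] [DecidableEq ι] (A : Matrix ι ι ℂ) : ℝ :=
  ‖Matrix.toEuclideanCLM (𝕜 := ℂ) A‖

/-- Quantum states: positive semidefinite operators with unit trace. -/
def IsState {ι : Type} [Fintype ι] (ρ : Matrix ι ι ℂ) : Prop :=
  ρ.PosSemidef ∧ ρ.trace = 1

/-- Insert the value `s` at position `i` into a configuration `a` of the remaining qudits. -/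
def ins {d n : ℕ} (i : Fin n) (a : {j : Fin n // j ≠ i} → Fin d) (s : Fin d) : Cfg d n :=
  fun j => if h : j = i then s else a ⟨j, h⟩

/-- The partial trace over the `i`-th qudit. -/
noncomputable def ptrace {d n : ℕ} (i : Fin n) (X : Mat d n) :
    Matrix ({j : Fin n // j ≠ i} → Fin d) ({j : Fin n // j ≠ i} → Fin d) ℂ :=
  fun a b => ∑ s : Fin d, X (ins i a s) (ins i b s)

/-- The marginal of `ρ` on the `i`-th qudit (partial trace over all the other qudits). -/
noncomputable def marginal {d n : ℕ} (i : Fin n) (ρ : Mat d n) :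
    Matrix (Fin d) (Fin d) ℂ :=
  fun s t => ∑ a : ({j : Fin n // j ≠ i} → Fin d), ρ (ins i a s) (ins i a t)

/-- Combine a configuration `s` of the qudits in `I` with a configuration `a` of the rest. -/
def insSet {d n : ℕ} (I : Finset (Fin n)) (a : {j : Fin n // j ∉ I} → Fin d)
    (s : {j : Fin n // j ∈ I} → Fin d) : Cfg d n :=
  fun j => if h : j ∈ I then s ⟨j, h⟩ else a ⟨j, h⟩

/-- The partial trace over the qudits in `I`. -/
noncomputable def ptraceSet {d n : ℕ} (I : Finset (Fin n)) (X : Mat d n) :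
    Matrix ({j : Fin n // j ∉ I} → Fin d) ({j : Fin n // j ∉ I} → Fin d) ℂ :=
  fun a b => ∑ s : ({j : Fin n // j ∈ I} → Fin d), X (insSet I a s) (insSet I b s)

/-- The set of values `(1/2) ∑ i ‖X⁽ⁱ⁾‖₁` over all decompositions `X = ∑ i X⁽ⁱ⁾` with
`X⁽ⁱ⁾` self-adjoint and `Tr_i X⁽ⁱ⁾ = 0`. -/
def W1Set {d n : ℕ} (X : Mat d n) : Set ℝ :=
  { r | ∃ Y : Fin n → Mat d n, (∀ i, (Y i).IsHermitian) ∧ (∀ i, ptrace i (Y i) = 0) ∧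
      X = ∑ i, Y i ∧ r = (1 / 2) * ∑ i, traceNorm (Y i) }

/-- The quantum `W₁` norm. -/
noncomputable def W1 {d n : ℕ} (X : Mat d n) : ℝ := sInf (W1Set X)

/-- The quantum Lipschitz constant: the dual norm of the quantum `W₁` norm. -/
noncomputable def lipschitz {d n : ℕ} (H : Mat d n) : ℝ :=
  sSup { r | ∃ X : Mat d n, X.IsHermitian ∧ X.trace = 0 ∧ W1 X ≤ 1 ∧
    r = ((H * X).trace).re }

/-- Extension `Φ ⊗ id_R` of a map on matrices. -/
def extendMap {A B R : Type} [Fintype A] [Fintype B] [Fintype R]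
    (Φ : Matrix A A ℂ → Matrix B B ℂ) (M : Matrix (A × R) (A × R) ℂ) :
    Matrix (B × R) (B × R) ℂ :=
  fun p q => Φ (fun a a' => M (a, p.2) (a', q.2)) p.1 q.1

/-- Quantum channels: completely positive trace-preserving linear maps. -/
def IsCPTP {A B : Type} [Fintype A] [Fintype B]
    (Φ : Matrix A A ℂ →ₗ[ℂ] Matrix B B ℂ) : Prop :=
  (∀ (k : ℕ) (M : Matrix (A × Fin k) (A × Fin k) ℂ), M.PosSemidef →
    (extendMap (fun N => Φ N) M).PosSemidef) ∧
  ∀ M, (Φ M).trace = M.trace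

/-- Action `φ_i ⊗ id` of a single-qudit map `φ` on the `i`-th qudit of `n` qudits. -/
def applyAt {d n : ℕ} (i : Fin n) (φ : Matrix (Fin d) (Fin d) ℂ → Matrix (Fin d) (Fin d) ℂ)
    (X : Mat d n) : Mat d n :=
  fun a b => φ (fun s t => X (Function.update a i s) (Function.update b i t)) (a i) (b i)

/-- Action `φ_I ⊗ id` of a map `φ` on the qudits in `I`. -/
def applyOn {d n : ℕ} (I : Finset (Fin n))
    (φ : Matrix ({j : Fin n // j ∈ I} → Fin d) ({j : Fin n // j ∈ I} → Fin d) ℂ →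
         Matrix ({j : Fin n // j ∈ I} → Fin d) ({j : Fin n // j ∈ I} → Fin d) ℂ)
    (X : Mat d n) : Mat d n :=
  fun a b =>
    φ (fun s t => X (insSet I (fun j => a j) s) (insSet I (fun j => b j) t))
      (fun j => a j) (fun j => b j)

/-- The operator obtained from `X` by permuting the tensor factors according to `π`. -/
def permuteMat {d n : ℕ} (π : Equiv.Perm (Fin n)) (X : Mat d n) : Mat d n :=
  fun a b => X (a ∘ π) (b ∘ π)

/-- Tensor product of an operator on the first `m` qudits with one on the last `n` qudits. -/
def tensorMN {d m n : ℕ} (A : Mat d m) (B : Mat d n) : Mat d (m + n) :=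
  fun a b =>
    A (fun i => a (Fin.castAdd n i)) (fun i => b (Fin.castAdd n i)) *
    B (fun j => a (Fin.natAdd m j)) (fun j => b (Fin.natAdd m j))

/-- Partial trace of an operator on `m + n` qudits over the last `n` qudits. -/
noncomputable def ptraceLast {d m n : ℕ} (X : Mat d (m + n)) : Mat d m :=
  fun a b => ∑ k : Cfg d n, X (Fin.append a k) (Fin.append b k)

/-- Partial trace of an operator on `m + n` qudits over the first `m` qudits. -/
noncomputable def ptraceFirst {d m n : ℕ} (X : Mat d (m + n)) : Mat d n :=
  fun a b => ∑ k : Cfg d m, X (Fin.append k a) (Fin.append k b)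

/-- `n`-fold tensor product `σ₁ ⊗ ⋯ ⊗ σₙ` of single-qudit operators. -/
def tensorAll {d n : ℕ} (σs : Fin n → Matrix (Fin d) (Fin d) ℂ) : Mat d n :=
  fun a b => ∏ i, σs i (a i) (b i)

/-- `I_d^{(i)} ⊗ K`: the identity on the `i`-th qudit tensored with an operator `K`
on the remaining qudits. -/
def idTensorAt {d n : ℕ} (i : Fin n)
    (K : Matrix ({j : Fin n // j ≠ i} → Fin d) ({j : Fin n // j ≠ i} → Fin d) ℂ) :
    Mat d n :=
  fun a b => if a i = b i then K (fun j => a j) (fun j => b j) else 0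

/-- `K ⊗ identity`: an operator acting only on the qudits in `I`. -/
def embedOn {d n : ℕ} (I : Finset (Fin n))
    (K : Matrix ({j : Fin n // j ∈ I} → Fin d) ({j : Fin n // j ∈ I} → Fin d) ℂ) :
    Mat d n :=
  fun a b => if (∀ j, j ∉ I → a j = b j) then K (fun j => a j) (fun j => b j) else 0

/-- The `n`-th tensor power `φ^{⊗n}` of a single-qudit linear map `φ`. -/
noncomputable def tensorPowMap {d n : ℕ}
    (φ : Matrix (Fin d) (Fin d) ℂ → Matrix (Fin d) (Fin d) ℂ) (X : Mat d n) : Mat d n :=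
  fun a b => ∑ s : Cfg d n, ∑ t : Cfg d n,
    X s t * ∏ j, φ (Matrix.single (s j) (t j) 1) (a j) (b j)

/-- The `1 → 1` norm of a map on single-qudit operators. -/
noncomputable def norm1to1 {d : ℕ}
    (F : Matrix (Fin d) (Fin d) ℂ → Matrix (Fin d) (Fin d) ℂ) : ℝ :=
  sSup { r | ∃ ρ : Matrix (Fin d) (Fin d) ℂ, IsState ρ ∧ r = traceNorm (F ρ) }

/-- The diamond norm of a map on single-qudit operators. -/
noncomputable def diamondNorm {d : ℕ}
    (F : Matrix (Fin d) (Fin d) ℂ → Matrix (Fin d) (Fin d) ℂ) : ℝ :=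
  sSup { r | ∃ ρ : Matrix (Fin d × Fin d) (Fin d × Fin d) ℂ, IsState ρ ∧
    r = traceNorm (extendMap F ρ) }

/-- The contraction coefficient (`W₁ → W₁` norm) of a map on `n`-qudit operators. -/
noncomputable def W1toW1 {d n : ℕ} (Φ : Mat d n → Mat d n) : ℝ :=
  sSup { r | ∃ X : Mat d n, X.IsHermitian ∧ X.trace = 0 ∧ W1 X ≤ 1 ∧ r = W1 (Φ X) }

/-- The von Neumann entropy `S(ρ) = -Tr[ρ ln ρ]` (natural logarithm). -/
noncomputable def vnEntropy {ι : Type} [Fintype ι] [DecidableEq ι] (ρ : Matrix ι ι ℂ) : ℝ :=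
  if h : ρ.IsHermitian then -∑ i, h.eigenvalues i * Real.log (h.eigenvalues i) else 0

/-- The logarithm of a self-adjoint matrix, via the spectral decomposition. -/
noncomputable def matLog {ι : Type} [Fintype ι] [DecidableEq ι] (ρ : Matrix ι ι ℂ) :
    Matrix ι ι ℂ :=
  if h : ρ.IsHermitian then
    (h.eigenvectorUnitary : Matrix ι ι ℂ) *
      Matrix.diagonal (fun i => (Real.log (h.eigenvalues i) : ℂ)) *
      (star (h.eigenvectorUnitary : Matrix ι ι ℂ))
  else 0

/-- The quantum relative entropy `S(ρ‖σ) = Tr[ρ (ln ρ - ln σ)]`. -/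
noncomputable def relEntropy {ι : Type} [Fintype ι] [DecidableEq ι]
    (ρ σ : Matrix ι ι ℂ) : ℝ :=
  ((ρ * (matLog ρ - matLog σ)).trace).re

/-- The Hamming distance between two configurations. -/
def hamming {d n : ℕ} (x y : Cfg d n) : ℕ :=
  (Finset.univ.filter (fun i => x i ≠ y i)).card

/-- Probability distributions on a finite set. -/
def IsProb {α : Type} [Fintype α] (p : α → ℝ) : Prop :=
  (∀ x, 0 ≤ p x) ∧ ∑ x, p x = 1

/-- Couplings of two probability distributions. -/
def IsCoupling {α : Type} [Fintype α] (π : α × α → ℝ) (p q : α → ℝ) : Prop :=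
  IsProb π ∧ (∀ x, ∑ y, π (x, y) = p x) ∧ (∀ y, ∑ x, π (x, y) = q y)

/-- The classical Wasserstein distance of order 1 with respect to the Hamming distance. -/
noncomputable def classicalW1 {d n : ℕ} (p q : Cfg d n → ℝ) : ℝ :=
  sInf { c | ∃ π : Cfg d n × Cfg d n → ℝ, IsCoupling π p q ∧
    c = ∑ x : Cfg d n, ∑ y : Cfg d n, (hamming x y : ℝ) * π (x, y) }

/-- The Lipschitz constant of a function on `[d]^n` with respect to the Hamming distance. -/
noncomputable def classicalLip {d n : ℕ} (f : Cfg d n → ℝ) : ℝ :=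
  sSup { r | ∃ x y : Cfg d n, x ≠ y ∧ r = |f x - f y| / (hamming x y : ℝ) }



section Holder

variable {ι : Type} [Fintype ι] [DecidableEq ι]

lemma traceNorm_eq_sum_abs (Y : Matrix ι ι ℂ) (hY : Y.IsHermitian) :
    traceNorm Y = ∑ i, |hY.eigenvalues i| := by
  classical
  set U : Matrix ι ι ℂ := (hY.eigenvectorUnitary : Matrix ι ι ℂ) with hUdef
  have hU1 : star U * U = 1 := Matrix.mem_unitaryGroup_iff'.mp hY.eigenvectorUnitary.2
  set P : Matrix ι ι ℂ :=
    U * Matrix.diagonal (fun i => ((|hY.eigenvalues i| : ℝ) : ℂ)) * star U with hPdef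
  have hP : P.PosSemidef := by
    refine Matrix.PosSemidef.mul_mul_conjTranspose_same ?_ U
    refine Matrix.posSemidef_diagonal_iff.mpr fun i => ?_
    exact Complex.zero_le_real.mpr (abs_nonneg _)
  have key : ∀ D E : Matrix ι ι ℂ, (U * D * star U) * (U * E * star U) = U * (D * E) * star U := by
    intro D E
    have h1 : star U * (U * E * star U) = E * star U := by
      rw [← Matrix.mul_assoc, ← Matrix.mul_assoc, hU1, Matrix.one_mul]
    calc (U * D * star U) * (U * E * star U) = U * D * (star U * (U * E * star U)) := by
          rw [Matrix.mul_assoc]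
      _ = U * D * (E * star U) := by rw [h1]
      _ = U * (D * E) * star U := by simp only [Matrix.mul_assoc]
  have hdiagsq : (Matrix.diagonal fun i => ((|hY.eigenvalues i| : ℝ) : ℂ)) *
      (Matrix.diagonal fun i => ((|hY.eigenvalues i| : ℝ) : ℂ)) =
      Matrix.diagonal (RCLike.ofReal ∘ hY.eigenvalues) *
        Matrix.diagonal (RCLike.ofReal ∘ hY.eigenvalues) := by
    have h0 : (fun i => ((|hY.eigenvalues i| : ℝ) : ℂ) * ((|hY.eigenvalues i| : ℝ) : ℂ)) =
        fun i => (RCLike.ofReal ∘ hY.eigenvalues) i * (RCLike.ofReal ∘ hY.eigenvalues) i := by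
      funext i
      simp only [Function.comp_apply]
      show ((|hY.eigenvalues i| : ℝ) : ℂ) * ((|hY.eigenvalues i| : ℝ) : ℂ) =
        ((hY.eigenvalues i : ℝ) : ℂ) * ((hY.eigenvalues i : ℝ) : ℂ)
      rw [← Complex.ofReal_mul, ← Complex.ofReal_mul, abs_mul_abs_self]
    rw [Matrix.diagonal_mul_diagonal, Matrix.diagonal_mul_diagonal, h0]
  have hsqrt : traceNorm Y = (cfc Real.sqrt (Y.conjTranspose * Y)).trace.re := by
    rw [Matrix.IsHermitian.cfc_eq (Matrix.posSemidef_conjTranspose_mul_self Y).1]; rfl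
  have hcfc : cfc Real.sqrt (Y.conjTranspose * Y) = cfc (fun x : ℝ => |x|) Y := by
    rw [hY.eq, ← pow_two, ← cfc_pow_id (R := ℝ) Y 2 hY.isSelfAdjoint,
      ← cfc_comp Real.sqrt (· ^ 2 : ℝ → ℝ) Y]
    congr 1
    funext x
    exact Real.sqrt_sq_eq_abs x
  rw [hsqrt, hcfc, Matrix.IsHermitian.cfc_eq hY, Matrix.IsHermitian.cfc,
    Unitary.conjStarAlgAut_apply, Matrix.trace_mul_cycle, Unitary.coe_star_mul_self,
    Matrix.one_mul, Matrix.trace_diagonal]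
  simp

lemma diag_conj_le_opNorm (M : Matrix ι ι ℂ) (U : Matrix ι ι ℂ) (hU : star U * U = 1) (i : ι) :
    ‖(star U * M * U) i i‖ ≤ opNorm M := by
  classical
  set u : EuclideanSpace ℂ ι := WithLp.toLp 2 (fun a => U a i) with hu
  have hMu : (Matrix.toEuclideanCLM (𝕜 := ℂ) M) u =
      WithLp.toLp 2 (M.mulVec (fun a => U a i)) :=
    Matrix.toEuclideanCLM_toLp M _
  have hinner : (inner ℂ u ((Matrix.toEuclideanCLM (𝕜 := ℂ) M) u) : ℂ) = (star U * M * U) i i := by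
    rw [hMu, hu]
    rw [EuclideanSpace.inner_eq_star_dotProduct]
    simp only [WithLp.ofLp_toLp, dotProduct,
      Matrix.mulVec, Matrix.mul_apply, Pi.star_apply, RCLike.star_def, dotProduct,
      Matrix.conjTranspose_apply, Matrix.star_apply, Finset.sum_mul, Finset.mul_sum]
    rw [Finset.sum_comm]
    exact Finset.sum_congr rfl fun a _ => Finset.sum_congr rfl fun b _ => by ring
  have hnorm : ‖u‖ ^ 2 = 1 := by
    have h2 : (inner ℂ u u : ℂ) = 1 := by
      simp only [EuclideanSpace.inner_eq_star_dotProduct]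
      have := congrFun (congrFun hU i) i
      simp only [Matrix.mul_apply, Matrix.one_apply_eq] at this
      simpa [dotProduct, mul_comm] using this
    rw [← inner_self_eq_norm_sq (𝕜 := ℂ) u, h2]
    simp
  have hn1 : ‖u‖ = 1 := by
    nlinarith [norm_nonneg u]
  calc ‖(star U * M * U) i i‖
      = ‖(inner ℂ u ((Matrix.toEuclideanCLM (𝕜 := ℂ) M) u) : ℂ)‖ := by rw [hinner]
    _ ≤ ‖u‖ * ‖(Matrix.toEuclideanCLM (𝕜 := ℂ) M) u‖ := norm_inner_le_norm _ _
    _ ≤ ‖u‖ * (‖Matrix.toEuclideanCLM (𝕜 := ℂ) M‖ * ‖u‖) := by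
        gcongr; exact (Matrix.toEuclideanCLM (𝕜 := ℂ) M).le_opNorm u
    _ = opNorm M := by rw [hn1, opNorm]; ring

lemma re_trace_mul_le (M Y : Matrix ι ι ℂ) (hY : Y.IsHermitian) :
    ((M * Y).trace).re ≤ opNorm M * traceNorm Y := by
  classical
  rw [traceNorm_eq_sum_abs Y hY]
  set U : Matrix ι ι ℂ := (hY.eigenvectorUnitary : Matrix ι ι ℂ) with hUdef
  have hU1 : star U * U = 1 := Matrix.mem_unitaryGroup_iff'.mp hY.eigenvectorUnitary.2
  set D : Matrix ι ι ℂ := Matrix.diagonal (RCLike.ofReal ∘ hY.eigenvalues) with hD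
  have htr : (M * Y).trace = ((star U * M * U) * D).trace := by
    conv_lhs => rw [hY.spectral_theorem, Unitary.conjStarAlgAut_apply]
    rw [← Matrix.mul_assoc, ← Matrix.mul_assoc, Matrix.trace_mul_comm,
      ← Matrix.mul_assoc, ← Matrix.mul_assoc]
  have htr2 : ((star U * M * U) * D).trace
      = ∑ i, (star U * M * U) i i * ((hY.eigenvalues i : ℝ) : ℂ) := by
    rw [Matrix.trace]
    refine Finset.sum_congr rfl fun i _ => ?_
    simp [Matrix.diag, Matrix.mul_diagonal, hD, Function.comp]
  rw [htr, htr2]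
  rw [Complex.re_sum]
  calc ∑ i, ((star U * M * U) i i * ((hY.eigenvalues i : ℝ) : ℂ)).re
      ≤ ∑ i, opNorm M * |hY.eigenvalues i| := by
        refine Finset.sum_le_sum fun i _ => ?_
        have h1 : ((star U * M * U) i i * ((hY.eigenvalues i : ℝ) : ℂ)).re
            = ((star U * M * U) i i).re * hY.eigenvalues i := by
          simp [Complex.mul_re]
        rw [h1]
        calc ((star U * M * U) i i).re * hY.eigenvalues i
            ≤ |((star U * M * U) i i).re * hY.eigenvalues i| := le_abs_self _
          _ = |((star U * M * U) i i).re| * |hY.eigenvalues i| := abs_mul _ _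
          _ ≤ ‖(star U * M * U) i i‖ * |hY.eigenvalues i| := by
              gcongr; exact Complex.abs_re_le_norm _
          _ ≤ opNorm M * |hY.eigenvalues i| :=
              mul_le_mul_of_nonneg_right (diag_conj_le_opNorm M U hU1 i) (abs_nonneg _)
      _ = opNorm M * ∑ i, |hY.eigenvalues i| := by rw [Finset.mul_sum]

lemma traceNorm_nonneg_of_herm (Y : Matrix ι ι ℂ) (hY : Y.IsHermitian) : 0 ≤ traceNorm Y := by
  rw [traceNorm_eq_sum_abs Y hY]
  exact Finset.sum_nonneg fun i _ => abs_nonneg _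

end Holder

section Decomp

variable {d n : ℕ}

lemma ins_apply_self {i : Fin n} (a : {j : Fin n // j ≠ i} → Fin d) (s : Fin d) :
    ins i a s i = s := by simp [ins]

lemma ins_apply_ne {i : Fin n} (a : {j : Fin n // j ≠ i} → Fin d) (s : Fin d)
    {j : Fin n} (h : j ≠ i) : ins i a s j = a ⟨j, h⟩ := by simp [ins, h]

lemma update_ins {i : Fin n} (α : {j : Fin n // j ≠ i} → Fin d) (s t : Fin d) :
    Function.update (ins i α s) i t = ins i α t := by
  funext j
  by_cases h : j = i
  · subst h; simp [ins]
  · simp [Function.update_apply, ins, h]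

/-- The channel replacing the `i`-th qudit by the maximally mixed state. -/
noncomputable def avgAt (i : Fin n) (X : Mat d n) : Mat d n :=
  fun a b => if a i = b i then
    (d : ℂ)⁻¹ * ∑ s, X (Function.update a i s) (Function.update b i s) else 0

lemma ptrace_avgAt (hd : d ≠ 0) (i : Fin n) (X : Mat d n) :
    ptrace i (avgAt i X) = ptrace i X := by
  funext α β
  have h1 : ∀ s : Fin d, avgAt i X (ins i α s) (ins i β s)
      = (d : ℂ)⁻¹ * ∑ t, X (ins i α t) (ins i β t) := by
    intro s
    rw [avgAt, if_pos (by rw [ins_apply_self, ins_apply_self])]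
    simp only [update_ins]
  rw [ptrace]
  simp only [h1]
  rw [Finset.sum_const, Finset.card_univ, Fintype.card_fin, nsmul_eq_mul, ← mul_assoc,
    mul_inv_cancel₀ (by exact_mod_cast hd), one_mul]
  rfl

lemma ptrace_sub (i : Fin n) (A B : Mat d n) :
    ptrace i (A - B) = ptrace i A - ptrace i B := by
  funext α β
  simp [ptrace, Finset.sum_sub_distrib]

lemma avgAt_isHermitian {i : Fin n} {X : Mat d n} (hX : X.IsHermitian) :
    (avgAt i X).IsHermitian := by
  have hXe : ∀ p q, star (X p q) = X q p := fun p q => congrFun (congrFun hX q) p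
  refine Matrix.ext fun a b => ?_
  rw [Matrix.conjTranspose_apply, avgAt, avgAt, apply_ite star]
  by_cases h : a i = b i
  · rw [if_pos h.symm, if_pos h, star_mul', star_inv₀, star_natCast, star_sum]
    congr 1
    exact Finset.sum_congr rfl fun s _ => hXe _ _
  · rw [if_neg (fun e => h e.symm), if_neg h, star_zero]

/-- The telescoping chain of partially averaged operators. -/
noncomputable def chain (X : Mat d n) : ℕ → Mat d n
  | 0 => X
  | (k+1) => if h : k < n then avgAt ⟨k, h⟩ (chain X k) else chain X k

lemma chain_isHermitian {X : Mat d n} (hX : X.IsHermitian) (k : ℕ) :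
    (chain X k).IsHermitian := by
  induction k with
  | zero => exact hX
  | succ k ih =>
    rw [chain]
    by_cases h : k < n
    · rw [dif_pos h]; exact avgAt_isHermitian ih
    · rw [dif_neg h]; exact ih

/-- Auxiliary explicit formula for `chain`. -/
noncomputable def Faux (X : Mat d n) (k : ℕ) (a b : Cfg d n) : ℂ :=
  ∑ u : Cfg d n, if (∀ j : Fin n, k ≤ (j : ℕ) → u j = a j) then
    X u (fun j => if (j : ℕ) < k then u j else b j) else 0

lemma Faux_step (X : Mat d n) (k : ℕ) (hk : k < n) (a b : Cfg d n) :
    ∑ s : Fin d, Faux X k (Function.update a ⟨k, hk⟩ s) (Function.update b ⟨k, hk⟩ s)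
      = Faux X (k+1) a b := by
  set i : Fin n := ⟨k, hk⟩ with hi
  have hik : (i : ℕ) = k := rfl
  unfold Faux
  rw [Finset.sum_comm]
  refine Finset.sum_congr rfl fun u _ => ?_
  rw [Finset.sum_eq_single (u i)]
  · by_cases hc : ∀ j : Fin n, (k+1 : ℕ) ≤ (j : ℕ) → u j = a j
    · rw [if_pos, if_pos hc]
      · congr 1
        funext j
        by_cases hj1 : (j : ℕ) < k
        · rw [if_pos hj1, if_pos (by omega)]
        · by_cases hj2 : (j : ℕ) = k
          · have hji : j = i := Fin.ext hj2
            subst hji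
            rw [if_neg hj1, if_pos (by omega), Function.update_self]
          · rw [if_neg hj1, if_neg (by omega),
              Function.update_of_ne (fun e => hj2 (by rw [e])) _ b]
      · intro j hj
        by_cases hji : j = i
        · subst hji; rw [Function.update_self]
        · rw [Function.update_of_ne hji]
          refine hc j ?_
          have : (j : ℕ) ≠ k := fun e => hji (Fin.ext e)
          omega
    · rw [if_neg, if_neg hc]
      intro hcond
      refine hc fun j hj => ?_
      have hji : j ≠ i := fun e => by
        rw [e, hik] at hj; omega
      have := hcond j (by omega)
      rwa [Function.update_of_ne hji] at this
  · intro s _ hs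
    rw [if_neg]
    intro hcond
    have := hcond i (le_of_eq rfl)
    rw [Function.update_self] at this
    exact hs this.symm
  · simp

lemma chain_apply (X : Mat d n) :
    ∀ k, k ≤ n → ∀ a b : Cfg d n, chain X k a b =
      if (∀ j : Fin n, (j : ℕ) < k → a j = b j) then ((d : ℂ)^k)⁻¹ * Faux X k a b else 0 := by
  intro k
  induction k with
  | zero =>
    intro _ a b
    rw [if_pos (fun j hj => absurd hj (Nat.not_lt_zero _))]
    have hF : Faux X 0 a b = X a b := by
      rw [Faux, Finset.sum_eq_single a]
      · rw [if_pos (fun j _ => rfl)]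
        have hfn : (fun j : Fin n => if (j : ℕ) < 0 then a j else b j) = b :=
          funext fun j => if_neg (Nat.not_lt_zero _)
        rw [hfn]
      · intro u _ hu
        rw [if_neg]
        intro hcond
        exact hu (funext fun j => hcond j (Nat.zero_le _))
      · simp
    rw [hF, pow_zero, inv_one, one_mul]
    rfl
  | succ k ih =>
    intro hkn a b
    have hk : k < n := by omega
    set i : Fin n := ⟨k, hk⟩ with hi
    have hik : (i : ℕ) = k := rfl
    have hch : chain X (k+1) a b = avgAt i (chain X k) a b := by
      rw [chain, dif_pos hk]
    rw [hch, avgAt]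
    by_cases hab : a i = b i
    · rw [if_pos hab]
      by_cases hlow : ∀ j : Fin n, (j : ℕ) < k → a j = b j
      · have hterm : ∀ s : Fin d,
            chain X k (Function.update a i s) (Function.update b i s)
              = ((d : ℂ)^k)⁻¹ * Faux X k (Function.update a i s) (Function.update b i s) := by
          intro s
          rw [ih (by omega)]
          rw [if_pos]
          intro j hj
          have hji : j ≠ i := fun e => by rw [e, hik] at hj; omega
          rw [Function.update_of_ne hji, Function.update_of_ne hji]
          exact hlow j hj
        simp only [hterm]
        rw [← Finset.mul_sum, Faux_step X k hk a b]
        rw [if_pos]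
        · rw [← mul_assoc]
          congr 1
          rw [pow_succ]
          rw [mul_inv]
          ring
        · intro j hj
          by_cases hji : j = i
          · subst hji; exact hab
          · refine hlow j ?_
            have : (j : ℕ) ≠ k := fun e => hji (Fin.ext e)
            omega
      · have hterm : ∀ s : Fin d,
            chain X k (Function.update a i s) (Function.update b i s) = 0 := by
          intro s
          rw [ih (by omega)]
          rw [if_neg]
          intro hcond
          refine hlow fun j hj => ?_
          have hji : j ≠ i := fun e => by rw [e, hik] at hj; omega
          have := hcond j hj
          rwa [Function.update_of_ne hji, Function.update_of_ne hji] at this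
        simp only [hterm]
        rw [if_neg]
        · simp
        · intro hcond
          exact hlow fun j hj => hcond j (by omega)
    · rw [if_neg hab, if_neg]
      intro hcond
      exact hab (hcond i (by rw [hik]; omega))

lemma chain_n_eq_zero (X : Mat d n) (htr : X.trace = 0) : chain X n = 0 := by
  refine Matrix.ext fun a b => ?_
  by_cases hab : a = b
  · subst hab
    rw [chain_apply X n le_rfl, if_pos (fun j _ => rfl)]
    have hF : Faux X n a a = X.trace := by
      rw [Faux, Matrix.trace]
      refine Finset.sum_congr rfl fun u _ => ?_
      rw [if_pos (fun j hj => absurd j.isLt (by omega))]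
      have : (fun j : Fin n => if (j : ℕ) < n then u j else a j) = u := by
        funext j; rw [if_pos j.isLt]
      rw [this]
      rfl
    rw [hF, htr, mul_zero]
    rfl
  · rw [chain_apply X n le_rfl, if_neg]
    · rfl
    · intro hcond
      exact hab (funext fun j => hcond j j.isLt)

lemma chain_succ_at (X : Mat d n) (i : Fin n) :
    chain X ((i : ℕ) + 1) = avgAt i (chain X (i : ℕ)) := by
  rw [chain, dif_pos i.isLt]

lemma decomposition_sum (X : Mat d n) (htr : X.trace = 0) :
    ∑ i : Fin n, (chain X (i : ℕ) - chain X ((i : ℕ) + 1)) = X := by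
  have h1 : ∑ i : Fin n, (chain X (i : ℕ) - chain X ((i : ℕ) + 1))
      = ∑ k ∈ Finset.range n, (chain X k - chain X (k + 1)) :=
    Fin.sum_univ_eq_sum_range (fun k => chain X k - chain X (k + 1)) n
  rw [h1, Finset.sum_range_sub' (fun k => chain X k) n, chain_n_eq_zero X htr]
  simp [chain]

/-- Reindexing configurations by the value at `i` and the rest. -/
def insEquiv (i : Fin n) : (Fin d × ({j : Fin n // j ≠ i} → Fin d)) ≃ Cfg d n where
  toFun p := ins i p.2 p.1
  invFun x := (x i, fun j => x j)
  left_inv p := by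
    refine Prod.ext ?_ ?_
    · simp [ins]
    · funext j
      exact ins_apply_ne p.2 p.1 j.2
  right_inv x := by
    funext j
    by_cases h : j = i
    · subst h; simp [ins]
    · simp [ins, h]

lemma embed_ins_indep {I : Finset (Fin n)} {i : Fin n} (hi : i ∉ I)
    (K : Matrix ({j : Fin n // j ∈ I} → Fin d) ({j : Fin n // j ∈ I} → Fin d) ℂ)
    (α β : {j : Fin n // j ≠ i} → Fin d) (s t : Fin d) :
    embedOn I K (ins i α s) (ins i β s) = embedOn I K (ins i α t) (ins i β t) := by
  have hne : ∀ j : Fin n, j ∈ I → j ≠ i := fun j hj e => hi (e ▸ hj)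
  have hC : (∀ j, j ∉ I → ins i α s j = ins i β s j) ↔
      (∀ j, j ∉ I → ins i α t j = ins i β t j) := by
    constructor <;> intro h j hj
    · by_cases hji : j = i
      · subst hji; rw [ins_apply_self, ins_apply_self]
      · rw [ins_apply_ne _ _ hji, ins_apply_ne _ _ hji]
        have := h j hj
        rwa [ins_apply_ne _ _ hji, ins_apply_ne _ _ hji] at this
    · by_cases hji : j = i
      · subst hji; rw [ins_apply_self, ins_apply_self]
      · rw [ins_apply_ne _ _ hji, ins_apply_ne _ _ hji]
        have := h j hj
        rwa [ins_apply_ne _ _ hji, ins_apply_ne _ _ hji] at this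
  have hargα : (fun j : {j : Fin n // j ∈ I} => ins i α s j) =
      fun j : {j : Fin n // j ∈ I} => ins i α t j := by
    funext j
    rw [ins_apply_ne _ _ (hne j j.2), ins_apply_ne _ _ (hne j j.2)]
  have hargβ : (fun j : {j : Fin n // j ∈ I} => ins i β s j) =
      fun j : {j : Fin n // j ∈ I} => ins i β t j := by
    funext j
    rw [ins_apply_ne _ _ (hne j j.2), ins_apply_ne _ _ (hne j j.2)]
  rw [embedOn, embedOn]
  have h1 := if_congr hC (by rw [hargα, hargβ] : K (fun j : {j : Fin n // j ∈ I} => ins i α s j)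
      (fun j : {j : Fin n // j ∈ I} => ins i β s j) = _) (rfl : (0:ℂ) = 0)
  exact h1

lemma embed_ins_offdiag {I : Finset (Fin n)} {i : Fin n} (hi : i ∉ I)
    (K : Matrix ({j : Fin n // j ∈ I} → Fin d) ({j : Fin n // j ∈ I} → Fin d) ℂ)
    (α β : {j : Fin n // j ≠ i} → Fin d) {s t : Fin d} (hst : s ≠ t) :
    embedOn I K (ins i α s) (ins i β t) = 0 := by
  rw [embedOn, if_neg]
  intro hcond
  have := hcond i hi
  rw [ins_apply_self, ins_apply_self] at this
  exact hst this

lemma trace_embed_mul (hd : 0 < d) {I : Finset (Fin n)} {i : Fin n} (hi : i ∉ I)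
    (K : Matrix ({j : Fin n // j ∈ I} → Fin d) ({j : Fin n // j ∈ I} → Fin d) ℂ)
    (Y : Mat d n) (hY : ptrace i Y = 0) :
    (embedOn I K * Y).trace = 0 := by
  classical
  have htr : (embedOn I K * Y).trace = ∑ a : Cfg d n, ∑ b : Cfg d n, embedOn I K a b * Y b a := by
    simp [Matrix.trace, Matrix.diag, Matrix.mul_apply]
  rw [htr]
  rw [← Equiv.sum_comp (insEquiv (d := d) i)
    (fun a => ∑ b : Cfg d n, embedOn I K a b * Y b a)]
  have hinner : ∀ p : Fin d × ({j : Fin n // j ≠ i} → Fin d),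
      (∑ b : Cfg d n, embedOn I K (insEquiv (d := d) i p) b * Y b (insEquiv (d := d) i p))
      = ∑ q : Fin d × ({j : Fin n // j ≠ i} → Fin d),
          embedOn I K (insEquiv (d := d) i p) (insEquiv (d := d) i q) *
            Y (insEquiv (d := d) i q) (insEquiv (d := d) i p) := by
    intro p
    rw [← Equiv.sum_comp (insEquiv (d := d) i)]
  simp only [hinner]
  rw [Fintype.sum_prod_type]
  have hins : ∀ (s : Fin d) (α : {j : Fin n // j ≠ i} → Fin d),
      insEquiv (d := d) i (s, α) = ins i α s := fun _ _ => rfl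
  set s0 : Fin d := ⟨0, hd⟩ with hs0
  have hstep : ∀ (s : Fin d) (α : {j : Fin n // j ≠ i} → Fin d),
      (∑ q : Fin d × ({j : Fin n // j ≠ i} → Fin d),
        embedOn I K (insEquiv (d := d) i (s, α)) (insEquiv (d := d) i q) *
          Y (insEquiv (d := d) i q) (insEquiv (d := d) i (s, α)))
      = ∑ β : {j : Fin n // j ≠ i} → Fin d,
          embedOn I K (ins i α s0) (ins i β s0) * Y (ins i β s) (ins i α s) := by
    intro s α
    rw [Fintype.sum_prod_type, Finset.sum_comm]
    refine Finset.sum_congr rfl fun β _ => ?_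
    rw [Finset.sum_eq_single s]
    · rw [hins, hins, embed_ins_indep hi K α β s s0]
    · intro t _ hts
      rw [hins, hins, embed_ins_offdiag hi K α β (fun e => hts e.symm), zero_mul]
    · simp
  simp only [hstep]
  rw [Finset.sum_comm]
  refine Finset.sum_eq_zero fun α _ => ?_
  rw [Finset.sum_comm]
  refine Finset.sum_eq_zero fun β _ => ?_
  rw [← Finset.mul_sum]
  have hpt : ∑ s : Fin d, Y (ins i β s) (ins i α s) = 0 := by
    have := congrFun (congrFun hY β) α
    simpa [ptrace] using this
  rw [hpt, mul_zero]

end Decomp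

theorem stmt16 {d n : ℕ} (hd : 2 ≤ d) (hn : 1 ≤ n)
    (Hs : Finset (Fin n) → Mat d n) (hherm : ∀ I, (Hs I).IsHermitian)
    (hloc : ∀ I, ∃ K, Hs I = embedOn I K) :
    lipschitz (∑ I : Finset (Fin n), Hs I) ≤
      2 * ⨆ i : Fin n, opNorm (∑ I ∈ Finset.univ.filter (fun I => i ∈ I), Hs I) := by
  classical
  set M : ℝ := ⨆ i : Fin n, opNorm (∑ I ∈ Finset.univ.filter (fun I => i ∈ I), Hs I) with hM
  have hbdd : BddAbove (Set.range fun i : Fin n =>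
      opNorm (∑ I ∈ Finset.univ.filter (fun I => i ∈ I), Hs I)) :=
    Set.Finite.bddAbove (Set.finite_range _)
  have hMle : ∀ i : Fin n, opNorm (∑ I ∈ Finset.univ.filter (fun I => i ∈ I), Hs I) ≤ M :=
    fun i => le_ciSup hbdd i
  have hM0 : 0 ≤ M := le_trans (norm_nonneg _) (hMle ⟨0, hn⟩)
  refine Real.sSup_le ?_ (by linarith)
  rintro r ⟨X, hXh, hXtr, hW1, rfl⟩
  -- nonemptiness of the decomposition set
  set Ys : Fin n → Mat d n := fun i => chain X (i : ℕ) - chain X ((i : ℕ) + 1) with hYs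
  have hYsherm : ∀ i, (Ys i).IsHermitian :=
    fun i => (chain_isHermitian hXh _).sub (chain_isHermitian hXh _)
  have hYspt : ∀ i, ptrace i (Ys i) = 0 := by
    intro i
    rw [hYs]
    simp only
    rw [ptrace_sub, chain_succ_at, ptrace_avgAt (by omega) i, sub_self]
  have hmem : ((1 : ℝ)/2) * ∑ i, traceNorm (Ys i) ∈ W1Set X :=
    ⟨Ys, hYsherm, hYspt, (decomposition_sum X hXtr).symm, rfl⟩
  -- the key bound for any decomposition
  have hbound : ∀ r' ∈ W1Set X, (((∑ I : Finset (Fin n), Hs I) * X).trace).re ≤ 2 * M * r' := by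
    rintro r' ⟨Y, hYherm, hYpt, hXeq, rfl⟩
    have e1 : ((∑ I : Finset (Fin n), Hs I) * X).trace
        = ∑ i : Fin n, ((∑ I ∈ Finset.univ.filter (fun I => i ∈ I), Hs I) * Y i).trace := by
      rw [hXeq, Finset.mul_sum, Matrix.trace_sum]
      refine Finset.sum_congr rfl fun i _ => ?_
      rw [Finset.sum_mul, Matrix.trace_sum]
      rw [← Finset.sum_filter_add_sum_filter_not Finset.univ (fun I => i ∈ I)
        (fun I => (Hs I * Y i).trace)]
      have hzero : ∑ I ∈ Finset.univ.filter (fun I => ¬ i ∈ I), (Hs I * Y i).trace = 0 := by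
        refine Finset.sum_eq_zero fun I hI => ?_
        obtain ⟨K, hK⟩ := hloc I
        rw [hK]
        exact trace_embed_mul (by omega) (Finset.mem_filter.mp hI).2 K (Y i) (hYpt i)
      rw [hzero, add_zero, Finset.sum_mul, Matrix.trace_sum]
    rw [e1, Complex.re_sum]
    calc ∑ i : Fin n, (((∑ I ∈ Finset.univ.filter (fun I => i ∈ I), Hs I) * Y i).trace).re
        ≤ ∑ i : Fin n, M * traceNorm (Y i) := by
          refine Finset.sum_le_sum fun i _ => ?_
          refine le_trans (re_trace_mul_le _ _ (hYherm i)) ?_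
          exact mul_le_mul_of_nonneg_right (hMle i) (traceNorm_nonneg_of_herm _ (hYherm i))
      _ = 2 * M * ((1 : ℝ)/2 * ∑ i, traceNorm (Y i)) := by rw [← Finset.mul_sum]; ring
  have hkey : ∀ ε : ℝ, 0 < ε → (((∑ I : Finset (Fin n), Hs I) * X).trace).re ≤ 2*M*(1+ε) := by
    intro ε hε
    obtain ⟨r', hr'mem, hr'lt⟩ := Real.lt_sInf_add_pos ⟨_, hmem⟩ hε
    have h1 : r' < 1 + ε := lt_of_lt_of_le hr'lt (by
      have : sInf (W1Set X) ≤ 1 := hW1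
      linarith)
    calc (((∑ I : Finset (Fin n), Hs I) * X).trace).re ≤ 2*M*r' := hbound r' hr'mem
      _ ≤ 2*M*(1+ε) := mul_le_mul_of_nonneg_left h1.le (by linarith)
  refine le_of_forall_pos_le_add fun δ hδ => ?_
  have hε : (0 : ℝ) < δ / (2*M+1) := by positivity
  have := hkey _ hε
  have h2 : 2*M*(1 + δ/(2*M+1)) ≤ 2*M + δ := by
    rw [mul_add]
    have : 2*M*(δ/(2*M+1)) ≤ δ := by
      rw [div_eq_inv_mul, ← mul_assoc]
      rw [mul_comm (2*M) (2*M+1)⁻¹]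
      have h3 : (2*M+1)⁻¹ * (2*M) ≤ 1 := by
        rw [inv_mul_le_iff₀ (by linarith)]
        linarith
      nlinarith
    linarith
  linarith

end QW1
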